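/- arXiv:2205.11099 — 2 statements merged into one kernel-verified Lean document; each statement's English description precedes it below -/
import Mathlib

section
/- Let (Z, 𝒟) be a probability space, (Ω, μ_A) a probability space modelling an algorithm's internal randomness, W a measurable space, A : Z^N × Ω → W a measurable map, and ℓ : W × Z → ℝ a bounded measurable loss. Fix ε ∈ (0,1) and δ > 0, and suppose there is a measurable set B ⊆ Z with 𝒟(B)^{N+1} > 1 − ε such that for every index i ∈ {1,…,N} and all samples S = (t_1,…,t_N) and S' = (t_1,…,t_{i−1}, t_i', t_{i+1},…,t_N) with t_1,…,t_N, t_i' ∈ B, one has sup_{t ∈ Z} ∫_Ω |ℓ(A(S,ω), t) − ℓ(A(S',ω), t)| dμ_A(ω) < δ. Then, setting C = B^N ⊆ Z^N, one has 𝒟^N(C) > 1 − ε and | E_{S ∼ 𝒟^N(·|C)} ∫_Ω [ (1/N) Σ_{i=1}^N ℓ(A(S,ω), t_i) − E_{S' ∼ 𝒟^N(·|C)} (1/N) Σ_{i=1}^N ℓ(A(S,ω), t_i') ] dμ_A(ω) | < δ, where 𝒟^N(·|C) denotes the conditional probability measure of the product measure 𝒟^N given the event C. -/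
open MeasureTheory ProbabilityTheory

private lemma integrable_bdd {α : Type*} [MeasurableSpace α] (μ : Measure α) [IsFiniteMeasure μ]
    {f : α → ℝ} (hf : AEStronglyMeasurable f μ) {C : ℝ} (h : ∀ x, |f x| ≤ C) :
    Integrable f μ :=
  (integrable_const C).mono' hf (Filter.Eventually.of_forall (by simpa [Real.norm_eq_abs] using h))

private lemma map_update_pi_aux {Z : Type*} [MeasurableSpace Z] (ν : Measure Z)
    [IsProbabilityMeasure ν] {N : ℕ} (i : Fin N) :
    Measure.map (fun p : (Fin N → Z) × Z => Function.update p.1 i p.2)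
      ((Measure.pi fun _ : Fin N => ν).prod ν) = Measure.pi fun _ : Fin N => ν := by
  classical
  refine (Measure.pi_eq fun s hs => ?_).symm
  rw [Measure.map_apply measurable_update' (MeasurableSet.univ_pi hs)]
  have hpre : (fun p : (Fin N → Z) × Z => Function.update p.1 i p.2) ⁻¹' Set.pi Set.univ s
      = (Set.pi Set.univ fun j => if j = i then Set.univ else s j) ×ˢ s i := by
    ext p
    simp only [Set.mem_preimage, Set.mem_pi, Set.mem_univ, true_implies, Set.mem_prod]
    constructor
    · intro h
      refine ⟨fun j => ?_, ?_⟩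
      · by_cases hj : j = i
        · rw [if_pos hj]; trivial
        · rw [if_neg hj]; have := h j; rwa [Function.update_of_ne hj] at this
      · have := h i; rwa [Function.update_self] at this
    · rintro ⟨h1, h2⟩ j
      by_cases hj : j = i
      · subst hj; rwa [Function.update_self]
      · rw [Function.update_of_ne hj]; have := h1 j; rwa [if_neg hj] at this
  rw [hpre, Measure.prod_prod, Measure.pi_pi]
  have h1 : (∏ j : Fin N, ν (if j = i then Set.univ else s j))
      = ∏ j ∈ Finset.univ.erase i, ν (s j) := by
    rw [← Finset.mul_prod_erase Finset.univ _ (Finset.mem_univ i)]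
    rw [if_pos rfl, measure_univ, one_mul]
    exact Finset.prod_congr rfl fun j hj => by
      rw [if_neg (Finset.mem_erase.1 hj).1]
  rw [h1, mul_comm]
  exact Finset.mul_prod_erase Finset.univ (fun j => ν (s j)) (Finset.mem_univ i)

private lemma integral_update_pi {Z : Type*} [MeasurableSpace Z] (ν : Measure Z)
    [IsProbabilityMeasure ν] {N : ℕ} (i : Fin N) {g : (Fin N → Z) → ℝ}
    (hg : AEStronglyMeasurable g (Measure.pi fun _ : Fin N => ν)) :
    ∫ S, g S ∂(Measure.pi fun _ : Fin N => ν)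
      = ∫ p, g (Function.update p.1 i p.2)
          ∂((Measure.pi fun _ : Fin N => ν).prod ν) := by
  conv_lhs => rw [← map_update_pi_aux ν i]
  exact integral_map measurable_update'.aemeasurable (by rwa [map_update_pi_aux])

private lemma integral_eval_pi {Z : Type*} [MeasurableSpace Z] (ν : Measure Z)
    [IsProbabilityMeasure ν] {N : ℕ} (i : Fin N) {g : Z → ℝ}
    (hg : StronglyMeasurable g) :
    ∫ S, g (S i) ∂(Measure.pi fun _ : Fin N => ν) = ∫ a, g a ∂ν := by
  have h1 := integral_update_pi ν i (g := fun S => g (S i))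
    (hg.comp_measurable (measurable_pi_apply i)).aestronglyMeasurable
  simp only [Function.update_self] at h1
  rw [h1]
  have hsnd : Measure.map Prod.snd ((Measure.pi fun _ : Fin N => ν).prod ν) = ν := by
    rw [Measure.map_snd_prod]; simp
  rw [← hsnd, integral_map measurable_snd.aemeasurable]
  rw [hsnd]; exact hg.aestronglyMeasurable

private lemma integral_lt_of_ae_lt {α : Type*} [MeasurableSpace α] (μ : Measure α)
    [IsProbabilityMeasure μ] {f : α → ℝ} {δ : ℝ} (hfi : Integrable f μ)
    (h : ∀ᵐ x ∂μ, f x < δ) : ∫ x, f x ∂μ < δ := by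
  have hint : Integrable (fun x => δ - f x) μ := (integrable_const δ).sub hfi
  have hae : ∀ᵐ x ∂μ, 0 < δ - f x := h.mono fun x hx => sub_pos.2 hx
  have hpos : 0 < ∫ x, (δ - f x) ∂μ := by
    rw [integral_pos_iff_support_of_nonneg_ae (hae.mono fun x hx => hx.le) hint]
    have h0 : μ {x | ¬ 0 < δ - f x} = 0 := ae_iff.1 hae
    have hsub : (Function.support fun x => δ - f x)ᶜ ⊆ {x | ¬ 0 < δ - f x} := by
      intro x hx
      simp only [Function.mem_support, not_not, Set.mem_compl_iff] at hx
      simp only [Set.mem_setOf_eq, not_lt]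
      linarith
    have h1 : μ (Function.support fun x => δ - f x)ᶜ = 0 := measure_mono_null hsub h0
    by_contra hc
    push_neg at hc
    have hc0 : μ (Function.support fun x => δ - f x) = 0 := le_antisymm hc (by simp)
    have : (1 : ENNReal) ≤ 0 := by
      calc (1 : ENNReal) = μ Set.univ := (measure_univ (μ := μ)).symm
        _ ≤ μ (Function.support fun x => δ - f x)
              + μ (Function.support fun x => δ - f x)ᶜ := by
            rw [← Set.union_compl_self (Function.support fun x => δ - f x)]
            exact measure_union_le _ _
        _ = 0 := by rw [h1, hc0, add_zero]
    simp at this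
  rw [integral_sub (integrable_const δ) hfi, integral_const] at hpos
  simp only [measure_univ, probReal_univ, ENNReal.toReal_one, smul_eq_mul, one_mul] at hpos
  linarith

private lemma abs_integral_le_of_bdd {α : Type*} [MeasurableSpace α] (μ : Measure α)
    [IsProbabilityMeasure μ] {f : α → ℝ} {C : ℝ} (h : ∀ x, |f x| ≤ C) :
    |∫ x, f x ∂μ| ≤ C := by
  have := norm_integral_le_of_norm_le_const (μ := μ) (f := f) (C := C)
    (Filter.Eventually.of_forall fun x => by simpa [Real.norm_eq_abs] using h x)
  simpa [Real.norm_eq_abs, measure_univ] using this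

/-- **Decomposable PAC uniform stability bounds the conditional generalization gap.**
`Dm` is the sample distribution `𝒟` on `Z`, `muA` models the algorithm's internal
randomness, `A` is the (randomized) algorithm, `ℓ` is a bounded measurable loss.
The hypothesis `hstab` is the decomposable PAC uniform stability condition on the
event `D_ε = B^{N+1}`; the conclusion states that `C = B^N` has probability greater
than `1 - ε` under `𝒟^N` and that the expected generalization gap, conditioned on
`C` (with the conditional generalization error also taken over `𝒟^N(·|C)`), is
smaller than `δ` in absolute value. -/
theorem pac_stability_generalization_gap
    {Z Ω W : Type*} [MeasurableSpace Z] [MeasurableSpace Ω] [MeasurableSpace W]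
    (Dm : Measure Z) [IsProbabilityMeasure Dm]
    (muA : Measure Ω) [IsProbabilityMeasure muA]
    (N : ℕ) (hN : 0 < N)
    (A : (Fin N → Z) → Ω → W) (hA : Measurable (Function.uncurry A))
    (ℓ : W → Z → ℝ) (hℓ : Measurable (Function.uncurry ℓ))
    (Cb : ℝ) (hbdd : ∀ w t, |ℓ w t| ≤ Cb)
    (ε δ : ℝ) (hε : ε ∈ Set.Ioo (0 : ℝ) 1) (hδ : 0 < δ)
    (B : Set Z) (hB : MeasurableSet B)
    (hBprob : 1 - ENNReal.ofReal ε < Dm B ^ (N + 1))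
    (hstab : ∀ (i : Fin N) (S S' : Fin N → Z), (∀ j, S j ∈ B) → (∀ j, S' j ∈ B) →
      (∀ j, j ≠ i → S j = S' j) →
      (⨆ t : Z, ∫ ω, |ℓ (A S ω) t - ℓ (A S' ω) t| ∂muA) < δ) :
    1 - ENNReal.ofReal ε <
        (Measure.pi fun _ : Fin N => Dm) {S : Fin N → Z | ∀ j, S j ∈ B} ∧
    |∫ S, ∫ ω,
        ((∑ i, ℓ (A S ω) (S i)) / N -
          ∫ S', (∑ i, ℓ (A S ω) (S' i)) / N
            ∂((Measure.pi fun _ : Fin N => Dm)[|{S : Fin N → Z | ∀ j, S j ∈ B}]))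
        ∂muA ∂((Measure.pi fun _ : Fin N => Dm)[|{S : Fin N → Z | ∀ j, S j ∈ B}])| < δ := by

  classical
  obtain ⟨hε0, hε1⟩ := hε
  have hNR : (0:ℝ) < N := Nat.cast_pos.mpr hN
  have hNne : (N:ℝ) ≠ 0 := ne_of_gt hNR
  haveI : NeZero N := ⟨hN.ne'⟩
  set C : Set (Fin N → Z) := {S : Fin N → Z | ∀ j, S j ∈ B} with hCdef
  have hCset : C = Set.pi Set.univ (fun _ : Fin N => B) := by
    ext S; simp [hCdef, Set.mem_pi]
  have hCmeas : MeasurableSet C := by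
    rw [hCset]; exact MeasurableSet.univ_pi fun _ => hB
  have hμC : (Measure.pi fun _ : Fin N => Dm) C = Dm B ^ N := by
    rw [hCset, Measure.pi_pi, Finset.prod_const, Finset.card_univ, Fintype.card_fin]
  have hBne : Dm B ≠ 0 := by
    intro h0
    rw [h0, zero_pow (Nat.succ_ne_zero N)] at hBprob
    exact absurd hBprob (by simp)
  have hfirst : 1 - ENNReal.ofReal ε < (Measure.pi fun _ : Fin N => Dm) C := by
    rw [hμC]
    refine lt_of_lt_of_le hBprob ?_
    rw [pow_succ]
    exact le_trans (mul_le_mul_right prob_le_one _) (by rw [mul_one])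
  set ν : Measure Z := Dm[|B] with hνdef
  haveI hνprob : IsProbabilityMeasure ν := cond_isProbabilityMeasure hBne
  have hνapp : ∀ s : Set Z, ν s = (Dm B)⁻¹ * Dm (B ∩ s) := fun s => cond_apply hB Dm s
  have hνB : ν B = 1 := by
    rw [hνapp, Set.inter_self]
    exact ENNReal.inv_mul_cancel hBne (measure_ne_top _ _)
  set π : Measure (Fin N → Z) := Measure.pi fun _ : Fin N => ν with hπdef
  haveI : IsProbabilityMeasure π := by rw [hπdef]; infer_instance
  have hcond : (Measure.pi fun _ : Fin N => Dm)[|C] = π := by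
    rw [hπdef]
    refine (Measure.pi_eq fun s hs => ?_).symm
    rw [cond_apply hCmeas, hCset, ← Set.pi_inter_distrib, Measure.pi_pi, Measure.pi_pi,
      Finset.prod_const, Finset.card_univ, Fintype.card_fin]
    calc ((Dm B) ^ N)⁻¹ * ∏ j : Fin N, Dm (B ∩ s j)
        = ∏ j : Fin N, ((Dm B)⁻¹ * Dm (B ∩ s j)) := by
          rw [Finset.prod_mul_distrib, Finset.prod_const, Finset.card_univ,
            Fintype.card_fin, ← ENNReal.inv_pow]
      _ = ∏ j : Fin N, ν (s j) := Finset.prod_congr rfl fun j _ => (hνapp (s j)).symm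
  refine ⟨hfirst, ?_⟩
  rw [hcond]
  -- measurability basics
  have hA2 : Measurable fun q : (Fin N → Z) × Ω => A q.1 q.2 := hA
  have hℓ2 : Measurable fun q : W × Z => ℓ q.1 q.2 := hℓ
  have hf_sm : StronglyMeasurable fun p : (Fin N → Z) × Z => ∫ ω, ℓ (A p.1 ω) p.2 ∂muA :=
    StronglyMeasurable.integral_prod_right' (ν := muA)
      (f := fun q : ((Fin N → Z) × Z) × Ω => ℓ (A q.1.1 q.2) q.1.2)
      (hℓ2.comp ((hA2.comp ((measurable_fst.comp measurable_fst).prodMk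
        measurable_snd)).prodMk (measurable_snd.comp measurable_fst))).stronglyMeasurable
  set f : (Fin N → Z) → Z → ℝ := fun S t => ∫ ω, ℓ (A S ω) t ∂muA with hfdef
  have hf_bd : ∀ S t, |f S t| ≤ Cb := fun S t =>
    abs_integral_le_of_bdd muA fun ω => hbdd (A S ω) t
  set Rhat : W → ℝ := fun w => ∫ a, ℓ w a ∂ν with hRdef
  have hRhat_sm : StronglyMeasurable Rhat :=
    StronglyMeasurable.integral_prod_right' (ν := ν)
      (f := fun q : W × Z => ℓ q.1 q.2) hℓ2.stronglyMeasurable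
  have hRhat_bd : ∀ w, |Rhat w| ≤ Cb := fun w =>
    abs_integral_le_of_bdd ν fun a => hbdd w a
  -- a.e. membership facts
  have hπCc : π Cᶜ = 0 := by
    have hπC : π C = 1 := by
      rw [hCset, hπdef, Measure.pi_pi]; simp [hνB]
    rw [measure_compl hCmeas (measure_ne_top _ _), hπC, measure_univ, tsub_self]
  have hνBc : ν Bᶜ = 0 := by
    rw [measure_compl hB (measure_ne_top _ _), hνB, measure_univ, tsub_self]
  have hPae : ∀ᵐ p ∂(π.prod ν), (∀ j, p.1 j ∈ B) ∧ p.2 ∈ B := by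
    have h1 : (π.prod ν) (Cᶜ ×ˢ (Set.univ : Set Z)) = 0 := by
      rw [Measure.prod_prod, hπCc, zero_mul]
    have h2 : (π.prod ν) ((Set.univ : Set (Fin N → Z)) ×ˢ Bᶜ) = 0 := by
      rw [Measure.prod_prod, hνBc, mul_zero]
    rw [ae_iff]
    refine measure_mono_null (fun p hp => ?_) (measure_union_null h1 h2)
    simp only [Set.mem_setOf_eq, not_and_or] at hp
    rcases hp with h | h
    · exact Or.inl ⟨h, trivial⟩
    · exact Or.inr ⟨trivial, h⟩
  -- Step A : the conditional generalization error is Rhat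
  have hi_int : ∀ (w : W) (i : Fin N), Integrable (fun S' : Fin N → Z => ℓ w (S' i)) π := by
    intro w i
    refine integrable_bdd π ?_ (fun S => hbdd w (S i))
    exact ((hℓ2.comp (measurable_const.prodMk measurable_id)).comp
      (measurable_pi_apply i)).aestronglyMeasurable
  have hinner : ∀ w : W, (∫ S', (∑ i, ℓ w (S' i))/(N:ℝ) ∂π) = Rhat w := by
    intro w
    rw [integral_div, integral_finset_sum _ fun i _ => hi_int w i]
    have heval : ∀ i : Fin N, ∫ S', ℓ w (S' i) ∂π = Rhat w := fun i =>
      integral_eval_pi ν i ((hℓ2.comp (measurable_const.prodMk measurable_id)).stronglyMeasurable)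
    simp only [heval, Finset.sum_const, Finset.card_univ, Fintype.card_fin, nsmul_eq_mul]
    exact mul_div_cancel_left₀ _ hNne
  simp only [hinner]
  -- Step B : algebra
  have halg : ∀ (w : W) (S : Fin N → Z),
      (∑ i, ℓ w (S i))/(N:ℝ) - Rhat w = (∑ i, (ℓ w (S i) - Rhat w))/(N:ℝ) := by
    intro w S
    rw [Finset.sum_sub_distrib, Finset.sum_const, Finset.card_univ, Fintype.card_fin,
      nsmul_eq_mul, sub_div, mul_div_cancel_left₀ _ hNne]
  simp only [halg]
  -- Step C : push integrals through the finite sum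
  have hgm : ∀ i : Fin N,
      Measurable fun q : (Fin N → Z) × Ω => ℓ (A q.1 q.2) (q.1 i) - Rhat (A q.1 q.2) := fun i =>
    (hℓ2.comp (hA2.prodMk ((measurable_pi_apply i).comp measurable_fst))).sub
      (hRhat_sm.measurable.comp hA2)
  have hg_bd : ∀ (i : Fin N) (S : Fin N → Z) (ω : Ω),
      |ℓ (A S ω) (S i) - Rhat (A S ω)| ≤ Cb + Cb := fun i S ω =>
    (abs_sub _ _).trans (add_le_add (hbdd _ _) (hRhat_bd _))
  have hintω : ∀ (i : Fin N) (S : Fin N → Z),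
      Integrable (fun ω => ℓ (A S ω) (S i) - Rhat (A S ω)) muA := fun i S =>
    integrable_bdd muA ((hgm i).comp measurable_prodMk_left).aestronglyMeasurable
      (fun ω => hg_bd i S ω)
  have hω : ∀ S : Fin N → Z, ∫ ω, (∑ i, (ℓ (A S ω) (S i) - Rhat (A S ω)))/(N:ℝ) ∂muA
      = (∑ i, ∫ ω, (ℓ (A S ω) (S i) - Rhat (A S ω)) ∂muA)/(N:ℝ) := by
    intro S; rw [integral_div, integral_finset_sum _ fun i _ => hintω i S]
  simp only [hω]
  have hDm_sm : ∀ i : Fin N, StronglyMeasurable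
      fun S : Fin N → Z => ∫ ω, (ℓ (A S ω) (S i) - Rhat (A S ω)) ∂muA := fun i =>
    StronglyMeasurable.integral_prod_right' (ν := muA)
      (f := fun q : (Fin N → Z) × Ω => ℓ (A q.1 q.2) (q.1 i) - Rhat (A q.1 q.2))
      (hgm i).stronglyMeasurable
  have hD_bd : ∀ (i : Fin N) (S : Fin N → Z),
      |∫ ω, (ℓ (A S ω) (S i) - Rhat (A S ω)) ∂muA| ≤ Cb + Cb := fun i S =>
    abs_integral_le_of_bdd muA fun ω => hg_bd i S ω
  have hintS : ∀ i : Fin N,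
      Integrable (fun S : Fin N → Z => ∫ ω, (ℓ (A S ω) (S i) - Rhat (A S ω)) ∂muA) π := fun i =>
    integrable_bdd π (hDm_sm i).aestronglyMeasurable (hD_bd i)
  rw [integral_div, integral_finset_sum _ fun i _ => hintS i]
  -- Step D : each summand is < δ in absolute value
  have hDlt : ∀ i : Fin N,
      |∫ S, ∫ ω, (ℓ (A S ω) (S i) - Rhat (A S ω)) ∂muA ∂π| < δ := by
    intro i
    have hsplit : ∀ S : Fin N → Z, ∫ ω, (ℓ (A S ω) (S i) - Rhat (A S ω)) ∂muA
        = f S (S i) - ∫ a, f S a ∂ν := by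
      intro S
      have hint1 : Integrable (fun ω => ℓ (A S ω) (S i)) muA :=
        integrable_bdd muA (hℓ2.comp ((hA2.comp measurable_prodMk_left).prodMk
          measurable_const)).aestronglyMeasurable (fun ω => hbdd _ _)
      have hint2 : Integrable (fun ω => Rhat (A S ω)) muA :=
        integrable_bdd muA (hRhat_sm.measurable.comp
          (hA2.comp measurable_prodMk_left)).aestronglyMeasurable (fun ω => hRhat_bd _)
      rw [integral_sub hint1 hint2]
      congr 1
      exact integral_integral_swap (integrable_bdd (muA.prod ν)
        (hℓ2.comp ((hA2.comp (measurable_const.prodMk measurable_fst)).prodMk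
          measurable_snd)).aestronglyMeasurable (fun q => hbdd _ _))
    simp only [hsplit]
    have hfint : Integrable (fun p : (Fin N → Z) × Z => f p.1 p.2) (π.prod ν) :=
      integrable_bdd _ hf_sm.aestronglyMeasurable (fun p => hf_bd p.1 p.2)
    have hfint1 : Integrable
        (fun p : (Fin N → Z) × Z => f (Function.update p.1 i p.2) p.2) (π.prod ν) :=
      integrable_bdd _ (hf_sm.comp_measurable
        (measurable_update'.prodMk measurable_snd)).aestronglyMeasurable
        (fun p => hf_bd _ _)
    have hT1 : ∫ S, f S (S i) ∂π
        = ∫ p, f (Function.update p.1 i p.2) p.2 ∂(π.prod ν) := by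
      have := integral_update_pi ν i (g := fun S => f S (S i))
        (hf_sm.comp_measurable (measurable_id.prodMk (measurable_pi_apply i))).aestronglyMeasurable
      simpa only [Function.update_self] using this
    have hT2 : ∫ S, ∫ a, f S a ∂ν ∂π = ∫ p, f p.1 p.2 ∂(π.prod ν) :=
      integral_integral (f := f) hfint
    have hsub1 : Integrable (fun S => f S (S i)) π :=
      integrable_bdd _ (hf_sm.comp_measurable
        (measurable_id.prodMk (measurable_pi_apply i))).aestronglyMeasurable
        (fun S => hf_bd _ _)
    have hsub2 : Integrable (fun S => ∫ a, f S a ∂ν) π :=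
      integrable_bdd _ (StronglyMeasurable.integral_prod_right' (ν := ν)
        (f := fun p : (Fin N → Z) × Z => f p.1 p.2) hf_sm).aestronglyMeasurable
        (fun S => abs_integral_le_of_bdd ν fun a => hf_bd S a)
    rw [integral_sub hsub1 hsub2, hT1, hT2, ← integral_sub hfint1 hfint]
    have habs : |∫ p, (f (Function.update p.1 i p.2) p.2 - f p.1 p.2) ∂(π.prod ν)|
        ≤ ∫ p, |f (Function.update p.1 i p.2) p.2 - f p.1 p.2| ∂(π.prod ν) := by
      simpa [Real.norm_eq_abs] using norm_integral_le_integral_norm (μ := π.prod ν)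
        (fun p => f (Function.update p.1 i p.2) p.2 - f p.1 p.2)
    refine lt_of_le_of_lt habs ?_
    refine integral_lt_of_ae_lt _ (integrable_bdd _ ?_ (C := Cb + Cb) ?_) ?_
    · exact (by simpa [Real.norm_eq_abs] using (hfint1.1.sub hfint.1).norm :
        AEStronglyMeasurable (fun p : (Fin N → Z) × Z => |f (Function.update p.1 i p.2) p.2 - f p.1 p.2|) (π.prod ν))
    · intro p; rw [abs_abs]
      exact (abs_sub _ _).trans (add_le_add (hf_bd _ _) (hf_bd _ _))
    · filter_upwards [hPae] with p hp
      obtain ⟨hp1, hp2⟩ := hp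
      have hSB' : ∀ j, Function.update p.1 i p.2 j ∈ B := by
        intro j; by_cases hj : j = i
        · subst hj; rwa [Function.update_self]
        · rw [Function.update_of_ne hj]; exact hp1 j
      have hkey := hstab i (Function.update p.1 i p.2) p.1 hSB' hp1
        (fun j hj => Function.update_of_ne hj _ _)
      refine lt_of_le_of_lt ?_ hkey
      have hint1 : Integrable (fun ω => ℓ (A (Function.update p.1 i p.2) ω) p.2) muA :=
        integrable_bdd muA (hℓ2.comp ((hA2.comp measurable_prodMk_left).prodMk
          measurable_const)).aestronglyMeasurable (fun ω => hbdd _ _)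
      have hint2 : Integrable (fun ω => ℓ (A p.1 ω) p.2) muA :=
        integrable_bdd muA (hℓ2.comp ((hA2.comp measurable_prodMk_left).prodMk
          measurable_const)).aestronglyMeasurable (fun ω => hbdd _ _)
      have heq : f (Function.update p.1 i p.2) p.2 - f p.1 p.2
          = ∫ ω, (ℓ (A (Function.update p.1 i p.2) ω) p.2 - ℓ (A p.1 ω) p.2) ∂muA :=
        (integral_sub hint1 hint2).symm
      rw [heq]
      refine le_trans ?_ (le_ciSup ?_ p.2)
      · simpa [Real.norm_eq_abs] using norm_integral_le_integral_norm (μ := muA)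
          (fun ω => ℓ (A (Function.update p.1 i p.2) ω) p.2 - ℓ (A p.1 ω) p.2)
      · refine ⟨Cb + Cb, ?_⟩
        rintro x ⟨t, rfl⟩
        refine le_trans (le_abs_self _) ?_
        refine abs_integral_le_of_bdd muA fun ω => ?_
        rw [abs_abs]
        exact (abs_sub _ _).trans (add_le_add (hbdd _ _) (hbdd _ _))
  -- conclusion
  rw [abs_div, Nat.abs_cast, div_lt_iff₀ hNR]
  calc |∑ i : Fin N, ∫ S, ∫ ω, (ℓ (A S ω) (S i) - Rhat (A S ω)) ∂muA ∂π|
      ≤ ∑ i : Fin N, |∫ S, ∫ ω, (ℓ (A S ω) (S i) - Rhat (A S ω)) ∂muA ∂π| :=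
        Finset.abs_sum_le_sum_abs _ _
    _ < ∑ _i : Fin N, δ := Finset.sum_lt_sum_of_nonempty Finset.univ_nonempty
        (fun i _ => hDlt i)
    _ = N * δ := by rw [Finset.sum_const, Finset.card_univ, Fintype.card_fin, nsmul_eq_mul]
    _ = δ * N := mul_comm _ _
end

section
/- Let A ∈ ℝ^{n×n} be a symmetric positive definite matrix and let b ∈ ℝ^n. Then ‖ A^{−1} b b^⊤ A^{−1} / (1 + b^⊤ A^{−1} b) ‖_F ≤ 1 / λ_min(A), where λ_min(A) > 0 is the smallest eigenvalue of A. -/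
open Matrix

noncomputable section

/-- Frobenius norm of a matrix. -/
def frob {m n : Type*} [Fintype m] [Fintype n] (A : Matrix m n ℝ) : ℝ :=
  Real.sqrt (∑ i, ∑ j, A i j ^ 2)

/-- Smallest eigenvalue of a symmetric real matrix (junk value `0` otherwise). -/
def lamMin {n : Type*} [Fintype n] [DecidableEq n] (A : Matrix n n ℝ) : ℝ :=
  letI := Classical.dec A.IsHermitian
  if h : A.IsHermitian then ⨅ i, h.eigenvalues i else 0

-- Rayleigh quotient lower bound
lemma rayleigh_lower {n : ℕ} (hn : 0 < n) {A : Matrix (Fin n) (Fin n) ℝ}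
    (hH : A.IsHermitian) (y : Fin n → ℝ) :
    (⨅ i, hH.eigenvalues i) * (y ⬝ᵥ y) ≤ y ⬝ᵥ A *ᵥ y := by
  haveI : Nonempty (Fin n) := ⟨⟨0, hn⟩⟩
  set U : Matrix (Fin n) (Fin n) ℝ := (hH.eigenvectorUnitary : Matrix (Fin n) (Fin n) ℝ) with hU
  set z : Fin n → ℝ := star U *ᵥ y with hz
  have hUU : U * star U = 1 := (Matrix.mem_unitaryGroup_iff).mp hH.eigenvectorUnitary.2
  have hb : y ⬝ᵥ y = z ⬝ᵥ z := by
    rw [hz, star_eq_conjTranspose, conjTranspose_eq_transpose_of_trivial,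
      Matrix.mulVec_transpose, ← Matrix.dotProduct_mulVec, Matrix.mulVec_vecMul]
    rw [star_eq_conjTranspose, conjTranspose_eq_transpose_of_trivial] at hUU
    rw [hUU, Matrix.one_mulVec]
  have ha : y ⬝ᵥ A *ᵥ y = ∑ i, hH.eigenvalues i * z i ^ 2 := by
    conv_lhs => rw [hH.spectral_theorem, Unitary.conjStarAlgAut_apply]
    rw [hz, star_eq_conjTranspose, conjTranspose_eq_transpose_of_trivial,
      Matrix.mulVec_transpose, ← Matrix.mulVec_mulVec, ← Matrix.mulVec_mulVec,
      Matrix.dotProduct_mulVec (v := y), ← Matrix.mulVec_transpose]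
    simp [Matrix.mulVec_diagonal, dotProduct, Matrix.mulVec_transpose, sq]
    ring_nf
    exact Finset.sum_congr rfl fun i _ => by ring
  rw [hb, ha]
  have : (⨅ i, hH.eigenvalues i) * (z ⬝ᵥ z) = ∑ i, (⨅ i, hH.eigenvalues i) * z i ^ 2 := by
    simp [dotProduct, Finset.mul_sum, sq]
  rw [this]
  refine Finset.sum_le_sum fun i _ => ?_
  exact mul_le_mul_of_nonneg_right (ciInf_le (Finite.bddBelow_range _) i) (sq_nonneg _)

/-- **Key deterministic estimate in Lemma 6.3 of the paper.** For a symmetric positive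
definite `A` and any vector `b`,
`‖ A⁻¹ b bᵀ A⁻¹ / (1 + bᵀ A⁻¹ b) ‖_F ≤ 1 / λ_min(A)`. -/
theorem frob_sherman_morrison_term_le (n : ℕ) (A : Matrix (Fin n) (Fin n) ℝ)
    (hA : A.PosDef) (b : Fin n → ℝ) :
    frob ((1 + b ⬝ᵥ A⁻¹.mulVec b)⁻¹ • (A⁻¹ * vecMulVec b b * A⁻¹)) ≤ 1 / lamMin A := by
  have hH := hA.isHermitian
  rcases Nat.eq_zero_or_pos n with hn | hn
  · subst hn
    simp [frob, lamMin, dif_pos hH, Real.sInf_empty, iInf]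
  haveI : Nonempty (Fin n) := ⟨⟨0, hn⟩⟩
  set c := lamMin A with hc
  have hcpos : 0 < c := by
    rw [hc, lamMin, dif_pos hH]
    obtain ⟨i, hi⟩ := exists_eq_ciInf_of_finite (f := hH.eigenvalues)
    rw [← hi]
    exact hA.eigenvalues_pos i
  set y : Fin n → ℝ := A⁻¹ *ᵥ b with hy
  have hAy : A *ᵥ y = b := by
    rw [hy, Matrix.mulVec_mulVec, Matrix.mul_nonsing_inv A (isUnit_iff_ne_zero.mpr hA.det_pos.ne'),
      Matrix.one_mulVec]
  set q : ℝ := b ⬝ᵥ A⁻¹.mulVec b with hq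
  have hqy : q = y ⬝ᵥ A *ᵥ y := by rw [hAy, hq, dotProduct_comm]
  have hq0 : 0 ≤ q := by
    rw [hqy]
    have := hA.posSemidef.dotProduct_mulVec_nonneg y
    simpa using this
  have h1q : 0 < 1 + q := by linarith
  have hmat : A⁻¹ * vecMulVec b b * A⁻¹ = vecMulVec y y := by
    have hsymm : A⁻¹ᵀ = A⁻¹ := by
      have := hH.inv
      rwa [Matrix.IsHermitian, conjTranspose_eq_transpose_of_trivial] at this
    ext i j
    simp only [Matrix.mul_apply, Matrix.vecMulVec_apply, hy, Matrix.mulVec, dotProduct]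
    rw [Finset.sum_mul_sum, Finset.sum_comm]
    refine Finset.sum_congr rfl fun k _ => ?_
    rw [Finset.sum_mul]
    refine Finset.sum_congr rfl fun l _ => ?_
    have h2 : A⁻¹ k j = A⁻¹ j k := by simpa using congrFun (congrFun hsymm j) k
    rw [h2]; ring
  rw [hmat]
  set s : ℝ := ∑ i, y i ^ 2 with hs
  have hs0 : 0 ≤ s := Finset.sum_nonneg fun i _ => sq_nonneg _
  have hfrob : frob ((1 + q)⁻¹ • vecMulVec y y) = (1 + q)⁻¹ * s := by
    rw [frob]
    have : ∑ i, ∑ j, ((1 + q)⁻¹ • vecMulVec y y) i j ^ 2 = ((1 + q)⁻¹ * s) ^ 2 := by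
      simp only [Matrix.smul_apply, Matrix.vecMulVec_apply, smul_eq_mul]
      conv_rhs => rw [sq, hs, Finset.mul_sum, Finset.sum_mul_sum]
      exact Finset.sum_congr rfl fun i _ => Finset.sum_congr rfl fun j _ => by ring
    rw [this, Real.sqrt_sq (by positivity)]
  rw [hfrob]
  have hray : c * (y ⬝ᵥ y) ≤ q := by
    rw [hqy, hc, lamMin, dif_pos hH]
    exact rayleigh_lower hn hH y
  have hyy : y ⬝ᵥ y = s := by
    simp [dotProduct, hs, sq]
  rw [hyy] at hray
  rw [inv_mul_eq_div, div_le_div_iff₀ h1q hcpos]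
  linarith

end
end
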